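/- Let A = [[0, X],[X^T, 0]] be an irreducible nonnegative symmetric real matrix (with square zero diagonal blocks), let à = [[0, X],[−X^T, 0]], and let B be a real skew-symmetric matrix with |B| = A. Then sp(B) = i·sp(A) if and only if B is {−1,1}-diagonally similar to Ã. -/

import Mathlib

open Matrix

/-- The spectrum of a real square matrix: the multiset of complex roots of its
characteristic polynomial (eigenvalues with multiplicity). -/
noncomputable def spec {ι : Type*} [Fintype ι] [DecidableEq ι] (M : Matrix ι ι ℝ) : Multiset ℂ :=
  (M.map Complex.ofReal).charpoly.roots

/-- The spectral radius: the maximum of the moduli of the complex eigenvalues. -/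
noncomputable def specRadius {ι : Type*} [Fintype ι] [DecidableEq ι] (M : Matrix ι ι ℝ) : ℝ :=
  sSup ((fun z : ℂ => ‖z‖) '' {z | z ∈ spec M})

/-- Entrywise absolute value of a real matrix. -/
def matAbs {ι : Type*} (M : Matrix ι ι ℝ) : Matrix ι ι ℝ := fun i j => |M i j|

/-- A walk of length `k` from `i` to `j` in the digraph of `A`
(arcs are the pairs with nonzero entry). -/
def HasWalk {ι : Type*} (A : Matrix ι ι ℝ) (i j : ι) (k : ℕ) : Prop :=
  ∃ f : ℕ → ι, f 0 = i ∧ f k = j ∧ ∀ t < k, A (f t) (f (t + 1)) ≠ 0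

/-- `A` is irreducible: its digraph is strongly connected. -/
def MatIrreducible {ι : Type*} (A : Matrix ι ι ℝ) : Prop :=
  ∀ i j : ι, ∃ k, HasWalk A i j k

/-- `p` is the period of `A`: the gcd of the lengths of the closed walks of its digraph. -/
def IsPeriod {ι : Type*} (A : Matrix ι ι ℝ) (p : ℕ) : Prop :=
  (∀ k, 0 < k → (∃ i, HasWalk A i i k) → p ∣ k) ∧
  ∀ q : ℕ, (∀ k, 0 < k → (∃ i, HasWalk A i i k) → q ∣ k) → q ∣ p

/-- `B'` is `{-1,1}`-diagonally similar to `B`: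
`B' = Λ⁻¹ * B * Λ` for a diagonal matrix `Λ` with diagonal entries in `{-1,1}`. -/
def DiagSignSimilar {ι : Type*} [Fintype ι] [DecidableEq ι] (B B' : Matrix ι ι ℝ) : Prop :=
  ∃ d : ι → ℝ, (∀ i, d i = 1 ∨ d i = -1) ∧
    B' = (Matrix.diagonal d)⁻¹ * B * Matrix.diagonal d

open Polynomial

section Helpers

variable {ι : Type*} [Fintype ι] [DecidableEq ι]

lemma evalCharpoly {R : Type*} [CommRing R] (M : Matrix ι ι R) (x : R) :
    M.charpoly.eval x = (x • (1 : Matrix ι ι R) - M).det := by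
  have : M.charpoly.eval x = (Polynomial.evalRingHom x) M.charpoly := rfl
  rw [this, Matrix.charpoly, RingHom.map_det]
  congr 1
  ext i j
  by_cases h : i = j <;>
    simp [h, charmatrix_apply, Matrix.map_apply, Matrix.sub_apply, Matrix.smul_apply,
      Matrix.one_apply, Matrix.diagonal_apply]

lemma charpolyConj (P Q M : Matrix ι ι ℂ) (hPQ : P * Q = 1) :
    (P * M * Q).charpoly = M.charpoly := by
  apply Polynomial.funext
  intro x
  rw [evalCharpoly, evalCharpoly]
  have h1 : x • (1 : Matrix ι ι ℂ) - P * M * Q = P * (x • (1 : Matrix ι ι ℂ) - M) * Q := by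
    rw [Matrix.mul_sub, Matrix.sub_mul, Matrix.mul_smul, Matrix.mul_one, Matrix.smul_mul, hPQ]
  rw [h1, Matrix.det_mul, Matrix.det_mul]
  have h2 : P.det * Q.det = 1 := by rw [← Matrix.det_mul, hPQ, Matrix.det_one]
  linear_combination (x • (1 : Matrix ι ι ℂ) - M).det * h2

lemma rootsSmul (c : ℂ) (hc : c ≠ 0) (M : Matrix ι ι ℂ) :
    (c • M).charpoly.roots = M.charpoly.roots.map (fun z => c * z) := by
  set s := M.charpoly.roots with hs
  have hsplits : Splits M.charpoly := IsAlgClosed.splits _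
  have hcard : Multiset.card s = Fintype.card ι := by
    rw [hs, (Polynomial.splits_iff_card_roots).mp hsplits, Matrix.charpoly_natDegree_eq_dim]
  have hM : M.charpoly = (s.map fun a => X - C a).prod :=
    hsplits.eq_prod_roots_of_monic (Matrix.charpoly_monic M)
  have key : (c • M).charpoly = ((s.map fun z => c * z).map fun a => X - C a).prod := by
    apply Polynomial.funext
    intro x
    rw [evalCharpoly]
    have h1 : x • (1 : Matrix ι ι ℂ) - c • M = c • ((c⁻¹ * x) • (1 : Matrix ι ι ℂ) - M) := by
      rw [smul_sub, smul_smul]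
      congr 2
      exact (mul_inv_cancel_left₀ hc x).symm
    rw [h1, Matrix.det_smul, ← evalCharpoly, hM]
    rw [Multiset.map_map]
    simp only [eval_multiset_prod, Multiset.map_map, Function.comp_def, eval_sub, eval_X, eval_C]
    have h2 : ∀ r : ℂ, x - c * r = c * (c⁻¹ * x - r) := fun r => by field_simp
    rw [Multiset.map_congr rfl (fun r _ => h2 r), Multiset.prod_map_mul, Multiset.map_const',
      Multiset.prod_replicate, hcard]
  rw [key, Polynomial.roots_multiset_prod_X_sub_C]

omit [Fintype ι] [DecidableEq ι] in
lemma isHermitian_of_transpose {A : Matrix ι ι ℝ} (h : Aᵀ = A) : A.IsHermitian := by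
  have h2 : Aᴴ = Aᵀ := by
    ext i j
    simp [Matrix.conjTranspose_apply, Matrix.transpose_apply]
  exact h2.trans h

lemma hermConj {A : Matrix ι ι ℝ} (hA : A.IsHermitian) (x : ℝ) :
    x • (1 : Matrix ι ι ℝ) - A =
      (hA.eigenvectorUnitary : Matrix ι ι ℝ) *
        (Matrix.diagonal (fun i => x - hA.eigenvalues i)) *
        (star (hA.eigenvectorUnitary : Matrix ι ι ℝ)) := by
  set U : Matrix ι ι ℝ := (hA.eigenvectorUnitary : Matrix ι ι ℝ) with hU
  have hUU : U * star U = 1 := (Matrix.mem_unitaryGroup_iff).mp hA.eigenvectorUnitary.2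
  have hD : Matrix.diagonal (fun i => x - hA.eigenvalues i) =
      x • (1 : Matrix ι ι ℝ) - Matrix.diagonal (RCLike.ofReal ∘ hA.eigenvalues) := by
    ext i j
    by_cases h : i = j <;>
      simp [h, Matrix.diagonal_apply, Matrix.sub_apply, Matrix.smul_apply, Matrix.one_apply]
  rw [hD, Matrix.mul_sub, Matrix.sub_mul, Matrix.mul_smul, Matrix.mul_one, Matrix.smul_mul,
    hUU]
  conv_lhs => rw [hA.spectral_theorem, Unitary.conjStarAlgAut_apply]

lemma hermDet {A : Matrix ι ι ℝ} (hA : A.IsHermitian) (x : ℝ) :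
    (x • (1 : Matrix ι ι ℝ) - A).det = ∏ i, (x - hA.eigenvalues i) := by
  set U : Matrix ι ι ℝ := (hA.eigenvectorUnitary : Matrix ι ι ℝ) with hU
  have hUU : U * star U = 1 := (Matrix.mem_unitaryGroup_iff).mp hA.eigenvectorUnitary.2
  rw [hermConj hA x, Matrix.det_mul, Matrix.det_mul, ← Matrix.det_diagonal]
  have h2 : U.det * (star U).det = 1 := by rw [← Matrix.det_mul, hUU, Matrix.det_one]
  linear_combination (Matrix.diagonal (fun i => x - hA.eigenvalues i)).det * h2

lemma hermPSD {A : Matrix ι ι ℝ} (hA : A.IsHermitian) {x : ℝ}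
    (h : ∀ i, hA.eigenvalues i ≤ x) : (x • (1 : Matrix ι ι ℝ) - A).PosSemidef := by
  rw [hermConj hA x]
  exact (Matrix.posSemidef_diagonal_iff.mpr fun i => by simpa using h i
    ).mul_mul_conjTranspose_same _

lemma specRealMem (M : Matrix ι ι ℝ) (x : ℝ) :
    (x : ℂ) ∈ spec M ↔ (x • (1 : Matrix ι ι ℝ) - M).det = 0 := by
  unfold spec
  rw [Polynomial.mem_roots', Polynomial.IsRoot, evalCharpoly]
  have key : (x : ℂ) • (1 : Matrix ι ι ℂ) - M.map Complex.ofReal =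
      (x • (1 : Matrix ι ι ℝ) - M).map Complex.ofRealHom := by
    ext i j
    by_cases h : i = j <;>
      simp [h, Matrix.map_apply, Matrix.sub_apply, Matrix.smul_apply, Matrix.one_apply]
  have hdet : ((x • (1 : Matrix ι ι ℝ) - M).map Complex.ofRealHom).det =
      Complex.ofRealHom (x • (1 : Matrix ι ι ℝ) - M).det := by
    rw [RingHom.map_det, RingHom.mapMatrix_apply]
  rw [key, hdet]
  simp [Complex.ofReal_eq_zero, (Matrix.charpoly_monic _).ne_zero]

end Helpers

theorem coreThm {ι : Type*} [Fintype ι] [DecidableEq ι] (A C : Matrix ι ι ℝ)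
    (hAsym : Aᵀ = A) (hnn : ∀ p q, 0 ≤ A p q) (hirr : MatIrreducible A)
    (habs : ∀ p q, |C p q| = A p q) (hspec : spec C = spec A) :
    ∃ d : ι → ℝ, (∀ i, d i = 1 ∨ d i = -1) ∧ ∀ p q, C p q = d p * d q * A p q := by
  by_cases hA0 : A = 0
  · refine ⟨fun _ => 1, fun _ => Or.inl rfl, fun p q => ?_⟩
    have h := habs p q
    rw [hA0] at h ⊢
    simp only [Matrix.zero_apply] at h ⊢
    rw [abs_eq_zero] at h
    simp [h]
  · have hex : ∃ a b, A a b ≠ 0 := by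
      by_contra h
      push_neg at h
      exact hA0 (by ext p q; simp [h])
    obtain ⟨a, b, hab⟩ := hex
    haveI : Nonempty ι := ⟨a⟩
    have hA := isHermitian_of_transpose hAsym
    obtain ⟨i0, -, hmax⟩ :=
      Finset.exists_max_image Finset.univ hA.eigenvalues ⟨a, Finset.mem_univ a⟩
    set ρ := hA.eigenvalues i0 with hρ
    have hmax' : ∀ i, hA.eigenvalues i ≤ ρ := fun i => hmax i (Finset.mem_univ i)
    have hPSD := hermPSD hA hmax'
    have hray : ∀ u : ι → ℝ, u ⬝ᵥ (A *ᵥ u) ≤ ρ * (u ⬝ᵥ u) := by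
      intro u
      have h0 := hPSD.dotProduct_mulVec_nonneg u
      rw [star_trivial, Matrix.sub_mulVec, Matrix.smul_mulVec, Matrix.one_mulVec,
        dotProduct_sub, dotProduct_smul, smul_eq_mul] at h0
      linarith
    have hApos : 0 < A a b := lt_of_le_of_ne (hnn a b) (Ne.symm hab)
    set u0 : ι → ℝ := fun p => if p = a ∨ p = b then 1 else 0 with hu0
    have hu0nn : ∀ p, 0 ≤ u0 p := fun p => by
      by_cases h : p = a ∨ p = b <;> simp [hu0, h]
    have hu0a : u0 a = 1 := by simp [hu0]
    have hu0b : u0 b = 1 := by simp [hu0]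
    have huu : 0 < u0 ⬝ᵥ u0 := by
      rw [dotProduct]
      refine Finset.sum_pos' (fun p _ => mul_self_nonneg _)
        ⟨a, Finset.mem_univ a, by rw [hu0a]; norm_num⟩
    have huA : 0 < u0 ⬝ᵥ (A *ᵥ u0) := by
      rw [dotProduct]
      refine Finset.sum_pos' (fun p _ => mul_nonneg (hu0nn p) ?_) ⟨a, Finset.mem_univ a, ?_⟩
      · exact Finset.sum_nonneg fun q _ => mul_nonneg (hnn p q) (hu0nn q)
      · rw [hu0a, one_mul]
        have : A a b * u0 b ≤ (A *ᵥ u0) a :=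
          Finset.single_le_sum (fun q _ => mul_nonneg (hnn a q) (hu0nn q)) (Finset.mem_univ b)
        rw [hu0b, mul_one] at this
        exact lt_of_lt_of_le hApos this
    have hρpos : 0 < ρ := by nlinarith [hray u0]
    have hdetA : (ρ • (1 : Matrix ι ι ℝ) - A).det = 0 := by
      rw [hermDet hA]
      exact Finset.prod_eq_zero (Finset.mem_univ i0) (by rw [hρ]; ring)
    have hmem : (ρ : ℂ) ∈ spec C := by rw [hspec, specRealMem]; exact hdetA
    have hdetC : (ρ • (1 : Matrix ι ι ℝ) - C).det = 0 := (specRealMem C ρ).mp hmem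
    obtain ⟨v, hv0, hv⟩ := Matrix.exists_mulVec_eq_zero_iff.mpr hdetC
    have hCv : C *ᵥ v = ρ • v := by
      rw [Matrix.sub_mulVec, Matrix.smul_mulVec, Matrix.one_mulVec, sub_eq_zero] at hv
      exact hv.symm
    set w : ι → ℝ := fun p => |v p| with hw
    have hwnn : ∀ p, 0 ≤ w p := fun p => abs_nonneg _
    have hww : w ⬝ᵥ w = v ⬝ᵥ v :=
      Finset.sum_congr rfl fun p _ => abs_mul_abs_self _
    have hpt : ∀ p q, v p * (C p q * v q) ≤ w p * (A p q * w q) := by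
      intro p q
      calc v p * (C p q * v q) ≤ |v p * (C p q * v q)| := le_abs_self _
        _ = w p * (A p q * w q) := by rw [abs_mul, abs_mul, habs]
    have hsumC : v ⬝ᵥ (C *ᵥ v) = ∑ p, ∑ q, v p * (C p q * v q) := by
      simp [dotProduct, Matrix.mulVec, Finset.mul_sum]
    have hsumA : w ⬝ᵥ (A *ᵥ w) = ∑ p, ∑ q, w p * (A p q * w q) := by
      simp [dotProduct, Matrix.mulVec, Finset.mul_sum]
    have hvCv : v ⬝ᵥ (C *ᵥ v) = ρ * (v ⬝ᵥ v) := by rw [hCv, dotProduct_smul, smul_eq_mul]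
    have hle1 : v ⬝ᵥ (C *ᵥ v) ≤ w ⬝ᵥ (A *ᵥ w) := by
      rw [hsumC, hsumA]
      exact Finset.sum_le_sum fun p _ => Finset.sum_le_sum fun q _ => hpt p q
    have heq : v ⬝ᵥ (C *ᵥ v) = w ⬝ᵥ (A *ᵥ w) := by
      have h2 := hray w
      rw [hww] at h2
      linarith [hvCv]
    have hwAw : w ⬝ᵥ (A *ᵥ w) = ρ * (w ⬝ᵥ w) := by
      rw [hww]
      linarith [hvCv, heq]
    have hAw : A *ᵥ w = ρ • w := by
      have h0 : w ⬝ᵥ ((ρ • (1 : Matrix ι ι ℝ) - A) *ᵥ w) = 0 := by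
        rw [Matrix.sub_mulVec, Matrix.smul_mulVec, Matrix.one_mulVec, dotProduct_sub,
          dotProduct_smul, smul_eq_mul, hwAw]
        ring
      have h1 := (hPSD.dotProduct_mulVec_zero_iff w).mp (by rw [star_trivial]; exact h0)
      rw [Matrix.sub_mulVec, Matrix.smul_mulVec, Matrix.one_mulVec, sub_eq_zero] at h1
      exact h1.symm
    have hterm : ∀ p q, v p * (C p q * v q) = w p * (A p q * w q) := by
      have h1 : ∑ p, ∑ q, v p * (C p q * v q) = ∑ p, ∑ q, w p * (A p q * w q) := by
        rw [← hsumC, ← hsumA, heq]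
      intro p q
      have h2 := (Finset.sum_eq_sum_iff_of_le
        (fun p _ => Finset.sum_le_sum fun q _ => hpt p q)).mp h1 p (Finset.mem_univ p)
      exact (Finset.sum_eq_sum_iff_of_le (fun q _ => hpt p q)).mp h2 q (Finset.mem_univ q)
    have hstep : ∀ p r, A p r ≠ 0 → 0 < w r → 0 < w p := by
      intro p r hpr hr
      have hApr : 0 < A p r := lt_of_le_of_ne (hnn p r) (Ne.symm hpr)
      have h1 : A p r * w r ≤ (A *ᵥ w) p :=
        Finset.single_le_sum (fun q _ => mul_nonneg (hnn p q) (hwnn q)) (Finset.mem_univ r)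
      rw [hAw] at h1
      have h2 : 0 < ρ * w p := lt_of_lt_of_le (mul_pos hApr hr) (by simpa using h1)
      nlinarith [hwnn p, hρpos]
    have hwalk : ∀ k q p, HasWalk A q p k → 0 < w q → 0 < w p := by
      intro k
      induction k with
      | zero =>
        rintro q p ⟨f, h0, hk, -⟩ hq
        have hpq : p = q := by rw [← hk, h0]
        rwa [hpq]
      | succ k ih =>
        rintro q p ⟨f, h0, hk, harc⟩ hq
        have hwalk' : HasWalk A q (f k) k :=
          ⟨f, h0, rfl, fun t ht => harc t (ht.trans (Nat.lt_succ_self k))⟩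
        have hr := ih q (f k) hwalk' hq
        have harck := harc k (Nat.lt_succ_self k)
        rw [hk] at harck
        have hsym' : A p (f k) ≠ 0 := by
          have h3 : A p (f k) = A (f k) p := by
            conv_lhs => rw [← hAsym]
            rfl
          rw [h3]
          exact harck
        exact hstep p (f k) hsym' hr
    obtain ⟨q0, hq0⟩ := Function.ne_iff.mp hv0
    have hwpos : ∀ p, 0 < w p := by
      intro p
      obtain ⟨k, hwk⟩ := hirr q0 p
      exact hwalk k q0 p hwk (abs_pos.mpr hq0)
    have hvnz : ∀ p, v p ≠ 0 := fun p => abs_pos.mp (hwpos p)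
    set d : ι → ℝ := fun p => if 0 < v p then 1 else -1 with hd
    have hdw : ∀ p, w p = d p * v p := by
      intro p
      rcases lt_trichotomy (v p) 0 with h | h | h
      · show |v p| = _
        rw [abs_of_neg h]
        simp [hd, not_lt.mpr h.le]
      · exact absurd h (hvnz p)
      · show |v p| = _
        rw [abs_of_pos h]
        simp [hd, h]
    refine ⟨d, fun i => by by_cases h : 0 < v i <;> simp [hd, h], fun p q => ?_⟩
    have h1 := hterm p q
    rw [hdw p, hdw q] at h1
    have h2 : v p * C p q * v q = v p * (d p * d q * A p q) * v q := by linear_combination h1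
    exact mul_left_cancel₀ (hvnz p) (mul_right_cancel₀ (hvnz q) h2)

lemma specSkew {m l : ℕ} (Y : Matrix (Fin m) (Fin l) ℝ) :
    spec (Matrix.fromBlocks 0 Y (-Yᵀ) (0 : Matrix (Fin l) (Fin l) ℝ)) =
      (spec (Matrix.fromBlocks 0 Y Yᵀ (0 : Matrix (Fin l) (Fin l) ℝ))).map
        (fun z => Complex.I * z) := by
  set δ : Fin m ⊕ Fin l → ℂ := Sum.elim (fun _ => 1) (fun _ => Complex.I) with hδ
  set δ' : Fin m ⊕ Fin l → ℂ := Sum.elim (fun _ => 1) (fun _ => -Complex.I) with hδ'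
  have hdd : Matrix.diagonal δ * Matrix.diagonal δ' = 1 := by
    rw [Matrix.diagonal_mul_diagonal]
    have h1 : (fun p => δ p * δ' p) = fun _ => (1 : ℂ) := by
      funext p
      rcases p with i | i <;> simp [hδ, hδ', Complex.I_mul_I]
    rw [h1, Matrix.diagonal_one]
  have key : Matrix.diagonal δ *
      (Complex.I • ((Matrix.fromBlocks 0 Y Yᵀ (0 : Matrix (Fin l) (Fin l) ℝ)).map
        Complex.ofReal)) * Matrix.diagonal δ' =
      (Matrix.fromBlocks 0 Y (-Yᵀ) (0 : Matrix (Fin l) (Fin l) ℝ)).map Complex.ofReal := by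
    ext p q
    rw [Matrix.mul_diagonal, Matrix.diagonal_mul]
    rcases p with i | i <;> rcases q with j | j <;>
      simp [hδ, hδ', Matrix.map_apply, Matrix.smul_apply] <;> ring_nf <;>
      simp [Complex.I_sq]
  unfold spec
  rw [← key, charpolyConj _ _ _ hdd, rootsSmul Complex.I Complex.I_ne_zero]

theorem stmt_14 {m l : ℕ} (X : Matrix (Fin m) (Fin l) ℝ)
    (hnn : ∀ i j, 0 ≤ X i j)
    (hirr : MatIrreducible (Matrix.fromBlocks 0 X Xᵀ (0 : Matrix (Fin l) (Fin l) ℝ)))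
    (B : Matrix (Fin m ⊕ Fin l) (Fin m ⊕ Fin l) ℝ)
    (hskew : Bᵀ = -B)
    (habs : matAbs B = Matrix.fromBlocks 0 X Xᵀ 0) :
    spec B = (spec (Matrix.fromBlocks 0 X Xᵀ (0 : Matrix (Fin l) (Fin l) ℝ))).map
        (fun z => Complex.I * z) ↔
    DiagSignSimilar (Matrix.fromBlocks 0 X (-Xᵀ) 0) B := by
  classical
  set A := Matrix.fromBlocks 0 X Xᵀ (0 : Matrix (Fin l) (Fin l) ℝ) with hA
  set Y : Matrix (Fin m) (Fin l) ℝ := fun i j => B (Sum.inl i) (Sum.inr j) with hY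
  have habs' : ∀ p q, |B p q| = A p q := fun p q => congrFun (congrFun habs p) q
  have hskew' : ∀ p q, B q p = - B p q := fun p q => by
    have h := congrFun (congrFun hskew p) q
    simpa using h
  have hBblock : B = Matrix.fromBlocks 0 Y (-Yᵀ) 0 := by
    ext p q
    rcases p with i | i <;> rcases q with j | j
    · have h := habs' (Sum.inl i) (Sum.inl j)
      simp only [hA, Matrix.fromBlocks_apply₁₁, Matrix.zero_apply] at h
      simpa using abs_eq_zero.mp h
    · rfl
    · have h := hskew' (Sum.inr i) (Sum.inl j)
      simp only [Matrix.fromBlocks_apply₂₁, Matrix.neg_apply, Matrix.transpose_apply]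
      show B (Sum.inr i) (Sum.inl j) = -Y j i
      have h2 : Y j i = B (Sum.inl j) (Sum.inr i) := rfl
      rw [h2]
      linarith [h]
    · have h := habs' (Sum.inr i) (Sum.inr j)
      simp only [hA, Matrix.fromBlocks_apply₂₂, Matrix.zero_apply] at h
      simpa using abs_eq_zero.mp h
  set C := Matrix.fromBlocks 0 Y Yᵀ (0 : Matrix (Fin l) (Fin l) ℝ) with hC
  have hCabs : ∀ p q, |C p q| = A p q := by
    rintro (i | i) (j | j)
    · simp [hC, hA]
    · have h := habs' (Sum.inl i) (Sum.inr j)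
      show |B (Sum.inl i) (Sum.inr j)| = A (Sum.inl i) (Sum.inr j)
      simpa [hA] using h
    · have h := habs' (Sum.inl j) (Sum.inr i)
      show |B (Sum.inl j) (Sum.inr i)| = A (Sum.inr i) (Sum.inl j)
      simpa [hA] using h
    · simp [hC, hA]
  have hAsym : Aᵀ = A := by
    rw [hA, Matrix.fromBlocks_transpose]
    simp
  have hAnn : ∀ p q, 0 ≤ A p q := by
    rintro (i | i) (j | j)
    · simp [hA]
    · simpa [hA] using hnn i j
    · simpa [hA] using hnn j i
    · simp [hA]
  have hspecB : spec B = (spec C).map (fun z => Complex.I * z) := by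
    rw [hBblock, hC]
    exact specSkew Y
  have hAt : spec (Matrix.fromBlocks 0 X (-Xᵀ) 0) =
      (spec A).map (fun z => Complex.I * z) := specSkew X
  constructor
  · intro h
    have hCA : spec C = spec A := by
      have hinj : Function.Injective (fun z : ℂ => Complex.I * z) := fun z w hzw => by
        simpa using mul_left_cancel₀ Complex.I_ne_zero hzw
      apply Multiset.map_injective hinj
      rw [← hspecB, h]
    obtain ⟨d, hd, hCd⟩ := coreThm A C hAsym hAnn hirr hCabs hCA
    have hdd : Matrix.diagonal d * Matrix.diagonal d = 1 := by
      rw [Matrix.diagonal_mul_diagonal]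
      have h1 : (fun p => d p * d p) = fun _ => (1 : ℝ) :=
        funext fun p => by rcases hd p with h | h <;> rw [h] <;> norm_num
      rw [h1, Matrix.diagonal_one]
    have hinv : (Matrix.diagonal d)⁻¹ = Matrix.diagonal d := Matrix.inv_eq_left_inv hdd
    refine ⟨d, hd, ?_⟩
    rw [hinv]
    ext p q
    rw [Matrix.mul_diagonal, Matrix.diagonal_mul]
    rcases p with i | i <;> rcases q with j | j
    · rw [hBblock]; simp
    · have h1 : B (Sum.inl i) (Sum.inr j) = C (Sum.inl i) (Sum.inr j) := by
        rw [hBblock]; simp [hC]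
      rw [h1, hCd]
      simp only [hA, Matrix.fromBlocks_apply₁₂]
      ring
    · have h1 : B (Sum.inr i) (Sum.inl j) = - C (Sum.inr i) (Sum.inl j) := by
        rw [hBblock]; simp [hC]
      rw [h1, hCd]
      simp only [hA, Matrix.fromBlocks_apply₂₁, Matrix.neg_apply]
      ring
    · rw [hBblock]; simp
  · rintro ⟨d, hd, hB⟩
    have hdd : Matrix.diagonal d * Matrix.diagonal d = 1 := by
      rw [Matrix.diagonal_mul_diagonal]
      have h1 : (fun p => d p * d p) = fun _ => (1 : ℝ) :=
        funext fun p => by rcases hd p with h | h <;> rw [h] <;> norm_num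
      rw [h1, Matrix.diagonal_one]
    have hinv : (Matrix.diagonal d)⁻¹ = Matrix.diagonal d := Matrix.inv_eq_left_inv hdd
    rw [hinv] at hB
    have hmapdd : Matrix.diagonal (Complex.ofReal ∘ d) *
        Matrix.diagonal (Complex.ofReal ∘ d) = 1 := by
      rw [Matrix.diagonal_mul_diagonal]
      have h1 : (fun p => (Complex.ofReal ∘ d) p * (Complex.ofReal ∘ d) p) =
          fun _ => (1 : ℂ) :=
        funext fun p => by rcases hd p with h | h <;> simp [h]
      rw [h1, Matrix.diagonal_one]
    have hspecEq : spec B = spec (Matrix.fromBlocks 0 X (-Xᵀ) 0) := by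
      rw [hB]
      unfold spec
      have hmap : ((Matrix.diagonal d * Matrix.fromBlocks 0 X (-Xᵀ) 0 *
          Matrix.diagonal d).map Complex.ofReal) =
          Matrix.diagonal (Complex.ofReal ∘ d) *
            ((Matrix.fromBlocks 0 X (-Xᵀ) 0).map Complex.ofReal) *
            Matrix.diagonal (Complex.ofReal ∘ d) := by
        ext p q
        rw [Matrix.map_apply, Matrix.mul_diagonal, Matrix.diagonal_mul,
          Matrix.mul_diagonal, Matrix.diagonal_mul, Matrix.map_apply]
        simp only [Function.comp_apply]
        push_cast
        ring
      rw [hmap, charpolyConj _ _ _ hmapdd]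
    rw [hspecEq, hAt]
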